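/- For H1 with δ = 0, the triple product identity T = (H_{jℓ} ∂_{u_ℓ} H_{ℓi} − H_{ℓi} ∂_{u_ℓ} H_{jℓ}) + (H_{ℓi} ∂_{u_i} H_{ij} − H_{ij} ∂_{u_i} H_{ℓi}) + (H_{ij} ∂_{u_j} H_{jℓ} − H_{jℓ} ∂_{u_j} H_{ij}) vanishes identically, where H_{ij} = (u_i - u_j)²/(α_j - α_i). -/

import Mathlib

lemma deriv_sq_div (c a x : ℝ) :
    deriv (fun t => (t - a)^2 / c) x = 2*(x-a)/c := by
  have : (fun t : ℝ => (t - a)^2 / c) = fun t => (t - a)^2 * c⁻¹ := by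
    funext t; ring
  rw [this, deriv_mul_const]
  · have h : HasDerivAt (fun t : ℝ => (t - a)^2) (2*(x-a)) x := by
      have := ((hasDerivAt_id x).sub_const a).fun_pow 2
      simpa [mul_comm] using this
    rw [h.deriv]; ring
  · exact (((hasDerivAt_id x).sub_const a).fun_pow 2).differentiableAt

lemma deriv_sq_div' (c a x : ℝ) :
    deriv (fun t => (a - t)^2 / c) x = -(2*(a-x))/c := by
  have : (fun t : ℝ => (a - t)^2 / c) = fun t => (t - a)^2 / c := by
    funext t; ring_nf
  rw [this, deriv_sq_div]; ring

/-- For H1 (δ = 0), with `H_{ij}(u_i,u_j) = (u_i - u_j)²/(α_j - α_i)`, the triple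
product expression `T_{ijℓ}` vanishes identically. -/
theorem H1_triple_product_identity (ai aj al ui uj ul : ℝ)
    (hij : ai ≠ aj) (hjl : aj ≠ al) (hli : al ≠ ai) :
    (((uj - ul)^2 / (al - aj)) * deriv (fun t => (t - ui)^2 / (ai - al)) ul
        - ((ul - ui)^2 / (ai - al)) * deriv (fun t => (uj - t)^2 / (al - aj)) ul)
      + (((ul - ui)^2 / (ai - al)) * deriv (fun t => (t - uj)^2 / (aj - ai)) ui
        - ((ui - uj)^2 / (aj - ai)) * deriv (fun t => (ul - t)^2 / (ai - al)) ui)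
      + (((ui - uj)^2 / (aj - ai)) * deriv (fun t => (t - ul)^2 / (al - aj)) uj
        - ((uj - ul)^2 / (al - aj)) * deriv (fun t => (ui - t)^2 / (aj - ai)) uj)
      = 0 := by
  rw [deriv_sq_div, deriv_sq_div, deriv_sq_div, deriv_sq_div', deriv_sq_div', deriv_sq_div']
  have h1 : al - aj ≠ 0 := sub_ne_zero.mpr (Ne.symm hjl)
  have h2 : ai - al ≠ 0 := sub_ne_zero.mpr (Ne.symm hli)
  have h3 : aj - ai ≠ 0 := sub_ne_zero.mpr (Ne.symm hij)
  field_simp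
  ring
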